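/- Let γ̃(x̃,ỹ) = γ̃₂(x̃,ỹ) − γ̃₁(x̃,ỹ) with γ̃₁ = −(x̃²+ỹ²)/(2R), γ̃₂ = 1 + (x̃²+ỹ²)/(2S), let p be a C² solution of the Reynolds equation −(1/12)div(γ̃³∇p) = u*_⊥ on ℝ² for a constant u*_⊥, and define the lubrication velocity field (u_x, u_y, u_z) as in the Poiseuille ansatz (u_h = (1/2)(z̃−γ̃₁)(z̃−γ̃₂)∇p, u_z = (1/2)div_{x̃,ỹ}[∫_{z̃}^{γ̃₂} (s−γ̃₂)(s−γ̃₁)∇p ds]). Then u_z(x̃,ỹ,γ̃₂(x̃,ỹ)) = 0 and u_z(x̃,ỹ,γ̃₁(x̃,ỹ)) = u*_⊥ for all (x̃,ỹ) ∈ ℝ², i.e., the ansatz attains the prescribed normal boundary data on both surfaces. -/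

import Mathlib

/-- Partial derivative in the first variable of a function of two real variables. -/
noncomputable def pdx (p : ℝ → ℝ → ℝ) (x y : ℝ) : ℝ := deriv (fun t => p t y) x

/-- Partial derivative in the second variable of a function of two real variables. -/
noncomputable def pdy (p : ℝ → ℝ → ℝ) (x y : ℝ) : ℝ := deriv (fun t => p x t) y

lemma integral_poly (a b A B c : ℝ) :
    (∫ s in a..b, (s - B) * (s - A) * c) =
      c * (b^3/3 - a^3/3) - c*(A+B) * (b^2/2 - a^2/2) + c*(A*B)*(b-a) := by
  have h : ∀ s : ℝ, (s - B) * (s - A) * c = c * s^2 - (c*(A+B)) * s + (c*(A*B)) := by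
    intro s; ring
  simp_rw [h]
  rw [intervalIntegral.integral_add
      ((show Continuous fun s : ℝ => c * s^2 - (c*(A+B)) * s by fun_prop).intervalIntegrable a b)
      intervalIntegrable_const,
    intervalIntegral.integral_sub
      ((show Continuous fun s : ℝ => c * s^2 by fun_prop).intervalIntegrable a b)
      ((show Continuous fun s : ℝ => (c*(A+B)) * s by fun_prop).intervalIntegrable a b),
    intervalIntegral.integral_const_mul, intervalIntegral.integral_const_mul,
    integral_pow, integral_id, intervalIntegral.integral_const]
  push_cast [smul_eq_mul]
  ring

lemma deriv_F (A B c : ℝ → ℝ) (a' b' c' x z : ℝ)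
    (hA : HasDerivAt A a' x) (hB : HasDerivAt B b' x) (hc : HasDerivAt c c' x) :
    deriv (fun t => ∫ s in z..(B t), (s - B t) * (s - A t) * c t) x
      = c' * ((B x)^3/3 - z^3/3 - (A x + B x) * ((B x)^2/2 - z^2/2) + (A x * B x) * (B x - z))
        + c x * ((B x)^2 * b' - (a' + b') * ((B x)^2/2 - z^2/2) - (A x + B x) * (B x * b')
            + (a' * B x + A x * b') * (B x - z) + (A x * B x) * b') := by
  have hfun : (fun t => ∫ s in z..(B t), (s - B t) * (s - A t) * c t)
      = fun t => c t * ((B t)^3/3 - z^3/3) - c t * (A t + B t) * ((B t)^2/2 - z^2/2)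
          + c t * (A t * B t) * (B t - z) := by
    funext t; rw [integral_poly]
  rw [hfun]
  have H := ((hc.mul (((hB.pow 3).div_const 3).sub_const (z^3/3))).sub
    ((hc.mul (hA.add hB)).mul (((hB.pow 2).div_const 2).sub_const (z^2/2)))).add
    ((hc.mul (hA.mul hB)).mul (hB.sub_const z))
  refine H.deriv.trans ?_
  simp only [Pi.mul_apply, Pi.add_apply, Pi.sub_apply, Pi.pow_apply]; push_cast; ring

lemma deriv_G (A B c : ℝ → ℝ) (a' b' c' x : ℝ)
    (hA : HasDerivAt A a' x) (hB : HasDerivAt B b' x) (hc : HasDerivAt c c' x) :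
    deriv (fun t => (B t - A t)^3 * c t) x
      = 3*(B x - A x)^2*(b' - a') * c x + (B x - A x)^3 * c' := by
  refine (((hB.sub hA).pow 3).mul hc).deriv.trans ?_
  simp only [Pi.mul_apply, Pi.sub_apply, Pi.pow_apply]; push_cast; ring

/-- if p solves the Reynolds equation -(1/12)div(γ̃³∇p) = u*_⊥ with
γ̃ = γ̃₂ - γ̃₁, then the vertical component u_z of the Poiseuille lubrication ansatz
attains the prescribed normal boundary data: u_z = 0 on z̃ = γ̃₂ and u_z = u*_⊥ on
z̃ = γ̃₁. -/
theorem lubrication_ansatz_boundary_values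
    (R S ustar : ℝ) (hR : 0 < R) (hS : 0 < S)
    (p : ℝ → ℝ → ℝ) (hp : ContDiff ℝ 2 (fun q : ℝ × ℝ => p q.1 q.2))
    (γ₁ γ₂ : ℝ → ℝ → ℝ)
    (hγ₁ : γ₁ = fun x y => -(x ^ 2 + y ^ 2) / (2 * R))
    (hγ₂ : γ₂ = fun x y => 1 + (x ^ 2 + y ^ 2) / (2 * S))
    (hreynolds : ∀ x y : ℝ,
      -(1 / 12) * (deriv (fun t => (γ₂ t y - γ₁ t y) ^ 3 * pdx p t y) x
        + deriv (fun t => (γ₂ x t - γ₁ x t) ^ 3 * pdy p x t) y) = ustar)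
    (uz : ℝ → ℝ → ℝ → ℝ)
    (huz : uz = fun x y z => (1 / 2) *
      (deriv (fun t => ∫ s in z..(γ₂ t y), (s - γ₂ t y) * (s - γ₁ t y) * pdx p t y) x
        + deriv (fun t => ∫ s in z..(γ₂ x t), (s - γ₂ x t) * (s - γ₁ x t) * pdy p x t) y)) :
    ∀ x y : ℝ, uz x y (γ₂ x y) = 0 ∧ uz x y (γ₁ x y) = ustar := by
  intro x y
  -- differentiability of the partial derivatives of p
  have hdx : Differentiable ℝ (fun t => pdx p t y) := by
    have hg : ContDiff ℝ 2 (fun s : ℝ => p s y) := hp.comp (contDiff_id.prodMk contDiff_const)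
    have h2 : ContDiff ℝ ((1:ℕ)+1) (fun s : ℝ => p s y) := by exact_mod_cast hg
    exact (contDiff_succ_iff_deriv.mp h2).2.2.differentiable (by norm_num)
  have hdy : Differentiable ℝ (fun t => pdy p x t) := by
    have hg : ContDiff ℝ 2 (fun s : ℝ => p x s) := hp.comp (contDiff_const.prodMk contDiff_id)
    have h2 : ContDiff ℝ ((1:ℕ)+1) (fun s : ℝ => p x s) := by exact_mod_cast hg
    exact (contDiff_succ_iff_deriv.mp h2).2.2.differentiable (by norm_num)
  have hcx : HasDerivAt (fun t => pdx p t y) (deriv (fun t => pdx p t y) x) x :=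
    (hdx x).hasDerivAt
  have hcy : HasDerivAt (fun t => pdy p x t) (deriv (fun t => pdy p x t) y) y :=
    (hdy y).hasDerivAt
  -- derivatives of the boundary surfaces
  have hAx : HasDerivAt (fun t : ℝ => -(t ^ 2 + y ^ 2) / (2 * R)) (-(2 * x ^ 1) / (2 * R)) x :=
    (((hasDerivAt_pow 2 x).add_const (y ^ 2)).neg).div_const (2 * R)
  have hBx : HasDerivAt (fun t : ℝ => 1 + (t ^ 2 + y ^ 2) / (2 * S)) (2 * x ^ 1 / (2 * S)) x := by
    simpa using (HasDerivAt.const_add 1 (((hasDerivAt_pow 2 x).add_const (y ^ 2)).div_const (2 * S)))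
  have hAy : HasDerivAt (fun t : ℝ => -(x ^ 2 + t ^ 2) / (2 * R)) (-(2 * y ^ 1) / (2 * R)) y := by
    have h : HasDerivAt (fun t : ℝ => t ^ 2 + x ^ 2) (2 * y ^ 1) y :=
      (hasDerivAt_pow 2 y).add_const (x ^ 2)
    have h2 : HasDerivAt (fun t : ℝ => x ^ 2 + t ^ 2) (2 * y ^ 1) y := by
      simpa [add_comm] using h
    exact h2.neg.div_const (2 * R)
  have hBy : HasDerivAt (fun t : ℝ => 1 + (x ^ 2 + t ^ 2) / (2 * S)) (2 * y ^ 1 / (2 * S)) y := by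
    have h : HasDerivAt (fun t : ℝ => t ^ 2 + x ^ 2) (2 * y ^ 1) y :=
      (hasDerivAt_pow 2 y).add_const (x ^ 2)
    have h2 : HasDerivAt (fun t : ℝ => x ^ 2 + t ^ 2) (2 * y ^ 1) y := by
      simpa [add_comm] using h
    simpa using (HasDerivAt.const_add 1 (h2.div_const (2 * S)))
  have hre := hreynolds x y
  simp only [hγ₁, hγ₂] at hre
  rw [huz]
  simp only [hγ₁, hγ₂]
  rw [deriv_G _ _ _ _ _ _ _ hAx hBx hcx, deriv_G _ _ _ _ _ _ _ hAy hBy hcy] at hre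
  constructor
  · rw [deriv_F _ _ _ _ _ _ _ _ hAx hBx hcx, deriv_F _ _ _ _ _ _ _ _ hAy hBy hcy]
    ring
  · rw [deriv_F _ _ _ _ _ _ _ _ hAx hBx hcx, deriv_F _ _ _ _ _ _ _ _ hAy hBy hcy]
    linear_combination hre
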